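/- (Indirect consistency.) Let Δ = (𝒜, 𝒞, ⪯) be a well-defined SAF or well-defined c-SAF with ⪯ reasonable, and let E be an att-complete extension of Δ. Then Cl_Rs({Conc(A) : A ∈ E}) is consistent. -/

import Mathlib

namespace ASPIC

/-- An inference rule over the language `L`: a list of antecedents and a consequent. -/
structure InfRule (L : Type) where
  ants : List L
  cons : L

/-- An ASPIC+ argumentation system: a contrariness function, disjoint sets of strict
and defeasible inference rules, and a naming function for (defeasible) rules;
every formula has at least one contradictory. -/
structure ArgSystem (L : Type) where
  contr : L → Set L
  Rs : Set (InfRule L)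
  Rd : Set (InfRule L)
  nm : InfRule L → L
  hdisj : Rs ∩ Rd = ∅
  hcontrad : ∀ φ : L, ∃ ψ : L, ψ ∈ contr φ ∧ φ ∈ contr ψ

/-- A knowledge base: disjoint axioms `Kn` and ordinary premises `Kp`. -/
structure KB (L : Type) where
  Kn : Set L
  Kp : Set L
  hdisj : Kn ∩ Kp = ∅

/-- Argument trees: a premise, or the application of an inference rule to a list of
sub-arguments.  (All such trees are finite.) -/
inductive Arg (L : Type) : Type where
  | prem : L → Arg L
  | app : List (Arg L) → InfRule L → Arg L

namespace Arg

variable {L : Type}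

/-- The conclusion of an argument. -/
def conc : Arg L → L
  | prem φ => φ
  | app _ r => r.cons

/-- The top rule of an argument (none for premises). -/
def topRule : Arg L → Option (InfRule L)
  | prem _ => none
  | app _ r => some r

mutual
  /-- The premises of an argument. -/
  def premises : Arg L → Set L
    | prem φ => {φ}
    | app l _ => premisesL l
  def premisesL : List (Arg L) → Set L
    | [] => ∅
    | a :: as => premises a ∪ premisesL as
end

mutual
  /-- The sub-arguments of an argument (including itself). -/
  def subs : Arg L → Set (Arg L)
    | prem φ => {Arg.prem φ}
    | app l r => subsL l ∪ {Arg.app l r}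
  def subsL : List (Arg L) → Set (Arg L)
    | [] => ∅
    | a :: as => subs a ∪ subsL as
end

mutual
  /-- The rules occurring in an argument. -/
  def rules : Arg L → Set (InfRule L)
    | prem _ => ∅
    | app l r => rulesL l ∪ {r}
  def rulesL : List (Arg L) → Set (InfRule L)
    | [] => ∅
    | a :: as => rules a ∪ rulesL as
end

mutual
  /-- The last defeasible rules of an argument (relative to the set `Rd` of
  defeasible rules). -/
  def lastDefRules (Rd : Set (InfRule L)) : Arg L → Set (InfRule L)
    | prem _ => ∅
    | app l r =>
        let rest := lastDefRulesL Rd l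
        {x | (r ∈ Rd ∧ x = r) ∨ (r ∉ Rd ∧ x ∈ rest)}
  def lastDefRulesL (Rd : Set (InfRule L)) : List (Arg L) → Set (InfRule L)
    | [] => ∅
    | a :: as => lastDefRules Rd a ∪ lastDefRulesL Rd as
end

end Arg

variable {L : Type}

/-- Well-formed arguments on the basis of an argumentation theory `(AS, K)`. -/
inductive IsArg (AS : ArgSystem L) (K : KB L) : Arg L → Prop where
  | prem {φ : L} : φ ∈ K.Kn ∪ K.Kp → IsArg AS K (.prem φ)
  | app {l : List (Arg L)} {r : InfRule L} :
      (∀ a ∈ l, IsArg AS K a) →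
      r ∈ AS.Rs ∪ AS.Rd →
      l.map Arg.conc = r.ants →
      IsArg AS K (.app l r)

/-- The defeasible rules of an argument. -/
def defRules (AS : ArgSystem L) (A : Arg L) : Set (InfRule L) := A.rules ∩ AS.Rd
/-- The strict rules of an argument. -/
def stRules (AS : ArgSystem L) (A : Arg L) : Set (InfRule L) := A.rules ∩ AS.Rs
/-- The ordinary premises of an argument. -/
def premP (K : KB L) (A : Arg L) : Set L := A.premises ∩ K.Kp
/-- The axiom premises of an argument. -/
def premN (K : KB L) (A : Arg L) : Set L := A.premises ∩ K.Kn
/-- An argument is strict if it uses no defeasible rules. -/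
def strictArg (AS : ArgSystem L) (A : Arg L) : Prop := defRules AS A = ∅
/-- An argument is firm if all its premises are axioms. -/
def firmArg (K : KB L) (A : Arg L) : Prop := A.premises ⊆ K.Kn

/-- `φ` is a contrary of `ψ`. -/
def contrary (AS : ArgSystem L) (φ ψ : L) : Prop := φ ∈ AS.contr ψ ∧ ψ ∉ AS.contr φ
/-- `φ` and `ψ` are contradictories of each other. -/
def contrad (AS : ArgSystem L) (φ ψ : L) : Prop := φ ∈ AS.contr ψ ∧ ψ ∈ AS.contr φ

/-- Strict derivability: `SDer AS S φ` iff there is a strict argument for `φ` all of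
whose premises lie in `S` (`S ⊢ φ`). -/
inductive SDer (AS : ArgSystem L) (S : Set L) : L → Prop where
  | prem {φ : L} : φ ∈ S → SDer AS S φ
  | rule {r : InfRule L} : r ∈ AS.Rs → (∀ ψ ∈ r.ants, SDer AS S ψ) → SDer AS S r.cons

/-- `S` is c-consistent: for no pair of contradictories are both strictly derivable. -/
def CCons (AS : ArgSystem L) (S : Set L) : Prop :=
  ∀ φ ψ : L, contrad AS φ ψ → ¬ (SDer AS S φ ∧ SDer AS S ψ)

/-- `S` is minimally c-inconsistent. -/
def MinCIncons (AS : ArgSystem L) (S : Set L) : Prop :=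
  ¬ CCons AS S ∧ ∀ S' ⊂ S, CCons AS S'

/-- Closure under strict rules. -/
inductive ClRs (AS : ArgSystem L) (S : Set L) : L → Prop where
  | base {φ : L} : φ ∈ S → ClRs AS S φ
  | step {r : InfRule L} : r ∈ AS.Rs → (∀ ψ ∈ r.ants, ClRs AS S ψ) → ClRs AS S r.cons

/-- Direct consistency of a set of formulas. -/
def Consistent (AS : ArgSystem L) (S : Set L) : Prop :=
  ¬ ∃ φ ψ : L, φ ∈ S ∧ ψ ∈ S ∧ ψ ∈ AS.contr φ

/-- The argumentation theory is closed under contraposition. -/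
def ContraClosed (AS : ArgSystem L) : Prop :=
  ∀ (S : Set L) (s : L), s ∈ S → ∀ φ : L, SDer AS S φ →
    ∀ nφ : L, contrad AS φ nφ →
      ∃ ns : L, contrad AS s ns ∧ SDer AS ((S \ {s}) ∪ {nφ}) ns

/-- The argumentation theory is closed under transposition. -/
def TransClosed (AS : ArgSystem L) : Prop :=
  ∀ r ∈ AS.Rs, ∀ i : Fin r.ants.length, ∀ nψ : L, contrad AS r.cons nψ →
    ∃ nφ : L, contrad AS (r.ants.get i) nφ ∧
      ({ ants := r.ants.set i.1 nψ, cons := nφ } : InfRule L) ∈ AS.Rs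

/-- Axiom consistency: the strict closure of the axioms is consistent. -/
def AxiomConsistent (AS : ArgSystem L) (K : KB L) : Prop :=
  Consistent AS {φ | ClRs AS K.Kn φ}

/-- c-classicality. -/
def CClassical (AS : ArgSystem L) : Prop :=
  ∀ S : Set L, MinCIncons AS S → ∀ φ ∈ S,
    ∃ nφ : L, contrad AS φ nφ ∧ SDer AS (S \ {φ}) nφ

/-- Well-formedness: contraried formulas are neither axioms nor consequents of strict rules. -/
def WellFormed (AS : ArgSystem L) (K : KB L) : Prop :=
  ∀ φ ψ : L, contrary AS φ ψ → ψ ∉ K.Kn ∧ ∀ r ∈ AS.Rs, r.cons ≠ ψ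

/-- Well-definedness for SAFs. -/
def WellDefinedSAF (AS : ArgSystem L) (K : KB L) : Prop :=
  AxiomConsistent AS K ∧ WellFormed AS K ∧ (ContraClosed AS ∨ TransClosed AS)

/-- Well-definedness for c-SAFs. -/
def WellDefinedCSAF (AS : ArgSystem L) (K : KB L) : Prop :=
  WellDefinedSAF AS K ∧ CClassical AS

/-- The arguments of the SAF defined by `(AS,K)`: all (finite) arguments. -/
def ArgsSAF (AS : ArgSystem L) (K : KB L) : Set (Arg L) := {A | IsArg AS K A}

/-- The arguments of the c-SAF defined by `(AS,K)`: all (finite) c-consistent arguments. -/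
def ArgsCSAF (AS : ArgSystem L) (K : KB L) : Set (Arg L) :=
  {A | IsArg AS K A ∧ CCons AS A.premises}

/-- `A` undercuts `B` on `B'`. -/
def undercutsOn (AS : ArgSystem L) (A B B' : Arg L) : Prop :=
  B' ∈ B.subs ∧ ∃ r ∈ AS.Rd, B'.topRule = some r ∧ A.conc ∈ AS.contr (AS.nm r)

/-- `A` rebuts `B` on `B'`. -/
def rebutsOn (AS : ArgSystem L) (A B B' : Arg L) : Prop :=
  B' ∈ B.subs ∧ ∃ r ∈ AS.Rd, B'.topRule = some r ∧ A.conc ∈ AS.contr B'.conc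

/-- `A` undermines `B` on `B'`. -/
def underminesOn (AS : ArgSystem L) (K : KB L) (A B B' : Arg L) : Prop :=
  B' ∈ B.subs ∧ ∃ φ ∈ K.Kp, B' = Arg.prem φ ∧ A.conc ∈ AS.contr φ

/-- `A` attacks `B` on `B'`. -/
def attacksOn (AS : ArgSystem L) (K : KB L) (A B B' : Arg L) : Prop :=
  undercutsOn AS A B B' ∨ rebutsOn AS A B B' ∨ underminesOn AS K A B B'

/-- `A` attacks `B`. -/
def attacks (AS : ArgSystem L) (K : KB L) (A B : Arg L) : Prop :=
  ∃ B', attacksOn AS K A B B'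

/-- Preference-independent attacks: undercuts, contrary-rebuts and contrary-undermines. -/
def prefIndepOn (AS : ArgSystem L) (K : KB L) (A B B' : Arg L) : Prop :=
  undercutsOn AS A B B' ∨
  (rebutsOn AS A B B' ∧ contrary AS A.conc B'.conc) ∨
  (underminesOn AS K A B B' ∧ contrary AS A.conc B'.conc)

/-- Preference-dependent attacks. -/
def prefDepOn (AS : ArgSystem L) (K : KB L) (A B B' : Arg L) : Prop :=
  attacksOn AS K A B B' ∧ ¬ prefIndepOn AS K A B B'

/-- The strict counterpart `≺` of an ordering `⪯`. -/
def sprec (pre : Arg L → Arg L → Prop) (X Y : Arg L) : Prop := pre X Y ∧ ¬ pre Y X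

/-- `A` defeats `B`, relative to a strict preference relation `slt` (`≺`). -/
def defeats (AS : ArgSystem L) (K : KB L) (slt : Arg L → Arg L → Prop) (A B : Arg L) : Prop :=
  ∃ B', prefIndepOn AS K A B B' ∨ (prefDepOn AS K A B B' ∧ ¬ slt A B')

/-- `A` is a strict continuation of the set of arguments `Γ`. -/
def StrictCont (AS : ArgSystem L) (K : KB L) (A : Arg L) (Γ : Set (Arg L)) : Prop :=
  premP K A = (⋃ B ∈ Γ, premP K B) ∧
  defRules AS A = (⋃ B ∈ Γ, defRules AS B) ∧
  (⋃ B ∈ Γ, stRules AS B) ⊆ stRules AS A ∧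
  (⋃ B ∈ Γ, premN K B) ⊆ premN K A

/-- `B'` has a fallible top: a defeasible top rule, or an ordinary premise. -/
def fallibleTop (AS : ArgSystem L) (K : KB L) (B' : Arg L) : Prop :=
  (∃ r ∈ AS.Rd, B'.topRule = some r) ∨ (∃ φ ∈ K.Kp, B' = Arg.prem φ)

/-- `M(B)`: the maximal fallible sub-arguments of `B`. -/
def MSet (AS : ArgSystem L) (K : KB L) (B : Arg L) : Set (Arg L) :=
  {B' | B' ∈ B.subs ∧ fallibleTop AS K B' ∧
    ¬ ∃ B'', B'' ∈ B.subs ∧ B'' ≠ B ∧ B'' ≠ B' ∧ fallibleTop AS K B'' ∧ B' ∈ B''.subs}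

/-- A reasonable argument ordering. -/
def Reasonable (AS : ArgSystem L) (K : KB L) (pre : Arg L → Arg L → Prop) : Prop :=
  (∀ A B : Arg L, strictArg AS A → firmArg K A →
      (¬ firmArg K B ∨ ¬ strictArg AS B) → sprec pre B A) ∧
  (∀ A B : Arg L, strictArg AS B → firmArg K B → ¬ sprec pre B A) ∧
  (∀ A A' B : Arg L, StrictCont AS K A' {A} →
      (¬ sprec pre A B → ¬ sprec pre A' B) ∧ (¬ sprec pre B A → ¬ sprec pre B A')) ∧
  (∀ s : Finset (Arg L), s.Nonempty → ∀ f : Arg L → Arg L,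
      (∀ C ∈ s, StrictCont AS K (f C) ((↑s : Set (Arg L)) \ {C})) →
      ¬ (∀ C ∈ s, sprec pre (f C) C))

/-- Conflict-freeness of `S` with respect to a relation (attack or defeat). -/
def CFwrt (rel : Arg L → Arg L → Prop) (S : Set (Arg L)) : Prop :=
  ∀ X ∈ S, ∀ Y ∈ S, ¬ rel X Y

/-- `A` is acceptable with respect to `S` (all its defeaters in `𝒜` are defeated from `S`). -/
def Acceptable (𝒜 : Set (Arg L)) (df : Arg L → Arg L → Prop)
    (S : Set (Arg L)) (A : Arg L) : Prop :=
  ∀ B ∈ 𝒜, df B A → ∃ C ∈ S, df C B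

/-- Admissible sets, relative to a conflict-freeness notion `cf` and defeat relation `df`. -/
def Admissible (𝒜 : Set (Arg L)) (cf : Set (Arg L) → Prop)
    (df : Arg L → Arg L → Prop) (S : Set (Arg L)) : Prop :=
  S ⊆ 𝒜 ∧ cf S ∧ ∀ A ∈ S, Acceptable 𝒜 df S A

/-- Complete extensions. -/
def Complete (𝒜 : Set (Arg L)) (cf : Set (Arg L) → Prop)
    (df : Arg L → Arg L → Prop) (S : Set (Arg L)) : Prop :=
  Admissible 𝒜 cf df S ∧ ∀ A ∈ 𝒜, Acceptable 𝒜 df S A → A ∈ S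

/-- Preferred extensions: ⊆-maximal complete extensions. -/
def Preferred (𝒜 : Set (Arg L)) (cf : Set (Arg L) → Prop)
    (df : Arg L → Arg L → Prop) (S : Set (Arg L)) : Prop :=
  Complete 𝒜 cf df S ∧ ∀ S', Complete 𝒜 cf df S' → S ⊆ S' → S' = S

/-- The grounded extension: the ⊆-minimal complete extension. -/
def Grounded (𝒜 : Set (Arg L)) (cf : Set (Arg L) → Prop)
    (df : Arg L → Arg L → Prop) (S : Set (Arg L)) : Prop :=
  Complete 𝒜 cf df S ∧ ∀ S', Complete 𝒜 cf df S' → S ⊆ S'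

/-- Stable extensions. -/
def Stable (𝒜 : Set (Arg L)) (cf : Set (Arg L) → Prop)
    (df : Arg L → Arg L → Prop) (S : Set (Arg L)) : Prop :=
  Preferred 𝒜 cf df S ∧ ∀ B ∈ 𝒜, B ∉ S → ∃ A ∈ S, df A B

/-- The set of antecedents of a rule. -/
def antsSet {L : Type} (r : InfRule L) : Set L := {φ | φ ∈ r.ants}

end ASPIC
namespace ASPIC
variable {L : Type}

mutual
theorem subs_trans (A : Arg L) : ∀ B ∈ A.subs, ∀ C ∈ B.subs, C ∈ A.subs := by
  intro B hB C hC
  cases A with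
  | prem φ =>
    simp [Arg.subs] at hB
    subst hB; exact hC
  | app l r =>
    simp only [Arg.subs, Set.mem_union, Set.mem_singleton_iff] at hB ⊢
    rcases hB with hB | hB
    · exact Or.inl (subsL_trans l B hB C hC)
    · subst hB
      simp only [Arg.subs, Set.mem_union, Set.mem_singleton_iff] at hC
      exact hC
theorem subsL_trans (l : List (Arg L)) : ∀ B ∈ Arg.subsL l, ∀ C ∈ B.subs, C ∈ Arg.subsL l := by
  intro B hB C hC
  cases l with
  | nil => simp [Arg.subsL] at hB
  | cons a as =>
    simp only [Arg.subsL, Set.mem_union] at hB ⊢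
    rcases hB with hB | hB
    · exact Or.inl (subs_trans a B hB C hC)
    · exact Or.inr (subsL_trans as B hB C hC)
end

theorem subs_self (A : Arg L) : A ∈ A.subs := by
  cases A with
  | prem φ => simp [Arg.subs]
  | app l r => simp [Arg.subs]

theorem mem_subsL {l : List (Arg L)} {B : Arg L} : B ∈ Arg.subsL l ↔ ∃ a ∈ l, B ∈ a.subs := by
  induction l with
  | nil => simp [Arg.subsL]
  | cons a as ih => simp [Arg.subsL, ih, Set.mem_union]

theorem mem_premisesL {l : List (Arg L)} {t : L} : t ∈ Arg.premisesL l ↔ ∃ a ∈ l, t ∈ a.premises := by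
  induction l with
  | nil => simp [Arg.premisesL]
  | cons a as ih => simp [Arg.premisesL, ih, Set.mem_union]

mutual
theorem premises_subs (A : Arg L) : ∀ B ∈ A.subs, B.premises ⊆ A.premises := by
  intro B hB
  cases A with
  | prem φ =>
    simp [Arg.subs] at hB; subst hB; exact subset_rfl
  | app l r =>
    simp only [Arg.subs, Set.mem_union, Set.mem_singleton_iff] at hB
    rcases hB with hB | hB
    · exact (premisesL_subs l B hB).trans (by simp [Arg.premises])
    · subst hB; exact subset_rfl
theorem premisesL_subs (l : List (Arg L)) : ∀ B ∈ Arg.subsL l, B.premises ⊆ Arg.premisesL l := by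
  intro B hB
  cases l with
  | nil => simp [Arg.subsL] at hB
  | cons a as =>
    simp only [Arg.subsL, Set.mem_union] at hB
    rcases hB with hB | hB
    · exact (premises_subs a B hB).trans (Set.subset_union_left)
    · exact (premisesL_subs as B hB).trans (Set.subset_union_right)
end

mutual
theorem prem_mem_subs (A : Arg L) : ∀ t ∈ A.premises, Arg.prem t ∈ A.subs := by
  intro t ht
  cases A with
  | prem φ =>
    simp [Arg.premises] at ht; subst ht; simp [Arg.subs]
  | app l r =>
    simp only [Arg.premises] at ht
    simp only [Arg.subs, Set.mem_union]
    exact Or.inl (prem_mem_subsL l t ht)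
theorem prem_mem_subsL (l : List (Arg L)) : ∀ t ∈ Arg.premisesL l, Arg.prem t ∈ Arg.subsL l := by
  intro t ht
  cases l with
  | nil => simp [Arg.premisesL] at ht
  | cons a as =>
    simp only [Arg.premisesL, Set.mem_union] at ht
    simp only [Arg.subsL, Set.mem_union]
    rcases ht with ht | ht
    · exact Or.inl (prem_mem_subs a t ht)
    · exact Or.inr (prem_mem_subsL as t ht)
end

theorem isArg_subs {AS : ArgSystem L} {K : KB L} {A : Arg L} (h : IsArg AS K A) :
    ∀ B ∈ A.subs, IsArg AS K B := by
  induction h with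
  | prem hφ =>
    intro B hB
    simp [Arg.subs] at hB; subst hB; exact IsArg.prem hφ
  | @app l r hl hr hmap ih =>
    intro B hB
    simp only [Arg.subs, Set.mem_union, Set.mem_singleton_iff] at hB
    rcases hB with hB | hB
    · obtain ⟨a, ha, hBa⟩ := mem_subsL.1 hB
      exact ih a ha B hBa
    · subst hB; exact IsArg.app hl hr hmap

theorem premises_subset_K {AS : ArgSystem L} {K : KB L} {A : Arg L} (h : IsArg AS K A) :
    A.premises ⊆ K.Kn ∪ K.Kp := by
  induction h with
  | prem hφ => intro t ht; simp [Arg.premises] at ht; subst ht; exact hφ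
  | @app l r hl hr hmap ih =>
    intro t ht
    simp only [Arg.premises] at ht
    obtain ⟨a, ha, hta⟩ := mem_premisesL.1 ht
    exact ih a ha hta

end ASPIC
namespace ASPIC
variable {L : Type}

theorem sder_mono {AS : ArgSystem L} {S T : Set L} (hST : S ⊆ T) {χ : L}
    (h : SDer AS S χ) : SDer AS T χ := by
  induction h with
  | prem h => exact SDer.prem (hST h)
  | rule hr hants ih => exact SDer.rule hr ih

theorem sder_cut {AS : ArgSystem L} {S T : Set L} {x χ : L}
    (h : SDer AS (S ∪ {x}) χ) (hx : SDer AS T x) (hST : S ⊆ T) : SDer AS T χ := by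
  induction h with
  | prem h =>
    rcases h with h | h
    · exact SDer.prem (hST h)
    · simp only [Set.mem_singleton_iff] at h; subst h; exact hx
  | rule hr hants ih => exact SDer.rule hr ih

theorem ccons_mono {AS : ArgSystem L} {S T : Set L} (hST : S ⊆ T) (h : CCons AS T) :
    CCons AS S := by
  intro φ ψ hc ⟨h1, h2⟩
  exact h φ ψ hc ⟨sder_mono hST h1, sder_mono hST h2⟩

theorem sder_clrs {AS : ArgSystem L} {S T : Set L} (hST : S ⊆ T) {χ : L}
    (h : SDer AS S χ) : ClRs AS T χ := by
  induction h with
  | prem h => exact ClRs.base (hST h)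
  | rule hr hants ih => exact ClRs.step hr ih

theorem sder_finite {AS : ArgSystem L} {S : Set L} {χ : L} (h : SDer AS S χ) :
    ∃ U : Finset L, ↑U ⊆ S ∧ SDer AS (↑U : Set L) χ := by
  classical
  induction h with
  | @prem φ h => exact ⟨{φ}, by simpa using h, SDer.prem (by simp)⟩
  | @rule r hr hants ih =>
    have : ∀ xs : List L, (∀ ψ ∈ xs, ∃ U : Finset L, ↑U ⊆ S ∧ SDer AS (↑U : Set L) ψ) →
        ∃ U : Finset L, ↑U ⊆ S ∧ ∀ ψ ∈ xs, SDer AS (↑U : Set L) ψ := by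
      intro xs
      induction xs with
      | nil => intro _; exact ⟨∅, by simp, by simp⟩
      | cons a as ihxs =>
        intro hall
        obtain ⟨U, hU, hdU⟩ := hall a (by simp)
        obtain ⟨V, hV, hdV⟩ := ihxs (fun ψ hψ => hall ψ (by simp [hψ]))
        refine ⟨U ∪ V, by simp [Set.union_subset_iff, hU, hV], ?_⟩
        intro ψ hψ
        rcases List.mem_cons.1 hψ with h | h
        · subst h; exact sder_mono (by simp [Finset.coe_union]) hdU
        · exact sder_mono (by simp [Finset.coe_union]) (hdV ψ h)
    obtain ⟨U, hU, hd⟩ := this r.ants ih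
    exact ⟨U, hU, SDer.rule hr hd⟩

theorem exists_min_cincons {AS : ArgSystem L} {T : Set L} (h : ¬ CCons AS T) :
    ∃ S ⊆ T, MinCIncons AS S := by
  classical
  simp only [CCons, not_forall, not_not] at h
  obtain ⟨φ, ψ, hc, hd⟩ := h
  obtain ⟨U1, hU1, hd1⟩ := sder_finite hd.1
  obtain ⟨U2, hU2, hd2⟩ := sder_finite hd.2
  have hVincons : ¬ CCons AS (↑(U1 ∪ U2) : Set L) := by
    intro hcc
    exact hcc φ ψ hc ⟨sder_mono (by simp [Finset.coe_union]) hd1,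
      sder_mono (by simp [Finset.coe_union]) hd2⟩
  have key : ∀ n (V : Finset L), V.card ≤ n → ¬ CCons AS (↑V : Set L) →
      ∃ S ⊆ (↑V : Set L), MinCIncons AS S := by
    intro n
    induction n with
    | zero =>
      intro V hcard hinc
      interval_cases h : V.card
      · simp only [Finset.card_eq_zero] at h; subst h
        refine ⟨(↑(∅ : Finset L) : Set L), subset_rfl, hinc, fun S' hS' => ?_⟩
        exact absurd hS'.subset (by simpa using hS'.ne)
    | succ n ihn =>
      intro V hcard hinc
      by_cases hmin : ∀ S' ⊂ (↑V : Set L), CCons AS S'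
      · exact ⟨↑V, subset_rfl, hinc, hmin⟩
      · push_neg at hmin
        obtain ⟨S', hS'ss, hS'inc⟩ := hmin
        have hfin : S'.Finite := Set.Finite.subset V.finite_toSet hS'ss.subset
        have hcoe : (↑hfin.toFinset : Set L) = S' := hfin.coe_toFinset
        have hlt : hfin.toFinset ⊂ V := by
          rw [← Finset.coe_ssubset] at *
          rw [hcoe]; exact hS'ss
        have hcard' : hfin.toFinset.card ≤ n := by
          have := Finset.card_lt_card hlt
          omega
        obtain ⟨S, hS, hSmin⟩ := ihn hfin.toFinset hcard' (by rw [hcoe]; exact hS'inc)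
        exact ⟨S, hS.trans (by rw [hcoe]; exact hS'ss.subset), hSmin⟩
  obtain ⟨S, hS, hSmin⟩ := key (U1 ∪ U2).card (U1 ∪ U2) le_rfl hVincons
  refine ⟨S, hS.trans ?_, hSmin⟩
  simp only [Finset.coe_union, Set.union_subset_iff]
  exact ⟨hU1, hU2⟩

theorem not_ccons_iff {AS : ArgSystem L} {S : Set L} :
    ¬ CCons AS S ↔ ∃ φ ψ, contrad AS φ ψ ∧ SDer AS S φ ∧ SDer AS S ψ := by
  constructor
  · intro h
    simp only [CCons, not_forall, not_not] at h
    obtain ⟨φ, ψ, hc, hd⟩ := h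
    exact ⟨φ, ψ, hc, hd⟩
  · rintro ⟨φ, ψ, hc, hd⟩ h
    exact h φ ψ hc hd

end ASPIC
namespace ASPIC
variable {L : Type}

/-- Every fallible sub-argument of `A` is a sub-argument of some member of `E`. -/
def Good (AS : ArgSystem L) (K : KB L) (E : Set (Arg L)) (A : Arg L) : Prop :=
  ∀ B' ∈ A.subs, fallibleTop AS K B' → ∃ W ∈ E, B' ∈ W.subs

theorem good_of_sub {AS : ArgSystem L} {K : KB L} {E : Set (Arg L)} {W A : Arg L}
    (hW : W ∈ E) (hA : A ∈ W.subs) : Good AS K E A := by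
  intro B' hB' _
  exact ⟨W, hW, subs_trans W A hA B' hB'⟩

theorem not_fallible_strict_app {AS : ArgSystem L} {K : KB L} {l : List (Arg L)}
    {r : InfRule L} (hr : r ∈ AS.Rs) : ¬ fallibleTop AS K (Arg.app l r) := by
  rintro (⟨r', hr', htop⟩ | ⟨φ, _, heq⟩)
  · simp only [Arg.topRule, Option.some.injEq] at htop
    subst htop
    have : r ∈ AS.Rs ∩ AS.Rd := ⟨hr, hr'⟩
    rw [AS.hdisj] at this
    exact this
  · cases heq

theorem not_fallible_axiom_prem {AS : ArgSystem L} {K : KB L} {t : L} (ht : t ∈ K.Kn) :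
    ¬ fallibleTop AS K (Arg.prem t) := by
  rintro (⟨r', _, htop⟩ | ⟨φ, hφ, heq⟩)
  · simp [Arg.topRule] at htop
  · injection heq with h
    subst h
    have : t ∈ K.Kn ∩ K.Kp := ⟨ht, hφ⟩
    rw [K.hdisj] at this
    exact this

/-- The conclusion of any argument is strictly derivable from the conclusions of its
fallible sub-arguments together with its axiom premises. -/
theorem sder_fallible {AS : ArgSystem L} {K : KB L} {A : Arg L} (h : IsArg AS K A)
    (V : Set L)
    (hfall : ∀ C' ∈ A.subs, fallibleTop AS K C' → C'.conc ∈ V)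
    (hax : A.premises ∩ K.Kn ⊆ V) : SDer AS V A.conc := by
  induction h with
  | @prem t hφ =>
    simp only [Arg.conc]
    rcases hφ with hn | hp
    · exact SDer.prem (hax ⟨by simp [Arg.premises], hn⟩)
    · refine SDer.prem (hfall _ (subs_self _) (Or.inr ⟨t, hp, rfl⟩))
  | @app l r hl hr hmap ih =>
    rcases hr with hrs | hrd
    · refine SDer.rule hrs ?_
      intro ψ hψ
      rw [← hmap] at hψ
      obtain ⟨a, ha, hconc⟩ := List.mem_map.1 hψ
      subst hconc
      refine ih a ha ?_ ?_
      · intro C' hC' hf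
        refine hfall C' ?_ hf
        simp only [Arg.subs, Set.mem_union]
        exact Or.inl (mem_subsL.2 ⟨a, ha, hC'⟩)
      · refine (Set.inter_subset_inter_left _ ?_).trans hax
        intro t ht
        simp only [Arg.premises]
        exact mem_premisesL.2 ⟨a, ha, ht⟩
    · refine SDer.prem (hfall _ (subs_self _) (Or.inl ⟨r, hrd, rfl⟩))

theorem exists_list_of_forall {Q : Arg L → Prop} :
    ∀ (xs : List L), (∀ t ∈ xs, ∃ D : Arg L, D.conc = t ∧ Q D) →
      ∃ l : List (Arg L), l.map Arg.conc = xs ∧ ∀ D ∈ l, Q D := by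
  intro xs
  induction xs with
  | nil => intro _; exact ⟨[], rfl, by simp⟩
  | cons a as ih =>
    intro hall
    obtain ⟨D, hD, hQ⟩ := hall a (by simp)
    obtain ⟨l, hl, hlQ⟩ := ih (fun t ht => hall t (by simp [ht]))
    refine ⟨D :: l, by simp [hD, hl], ?_⟩
    intro D' hD'
    rcases List.mem_cons.1 hD' with h | h
    · subst h; exact hQ
    · exact hlQ D' h

/-- Realization: a strict derivation from realizable formulas is realizable. -/
theorem realize {AS : ArgSystem L} {K : KB L} {E : Set (Arg L)} {S P : Set L}
    (hS : ∀ t ∈ S, ∃ D : Arg L, D.conc = t ∧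
      (IsArg AS K D ∧ Good AS K E D ∧ D.premises ⊆ P))
    {χ : L} (h : SDer AS S χ) :
    ∃ C : Arg L, C.conc = χ ∧ (IsArg AS K C ∧ Good AS K E C ∧ C.premises ⊆ P) := by
  induction h with
  | @prem t ht => exact hS t ht
  | @rule r hr hants ih =>
    obtain ⟨l, hmap, hprops⟩ := exists_list_of_forall r.ants ih
    refine ⟨Arg.app l r, rfl, IsArg.app (fun a ha => (hprops a ha).1) (Or.inl hr) hmap,
      ?_, ?_⟩
    · intro B' hB' hf
      simp only [Arg.subs, Set.mem_union, Set.mem_singleton_iff] at hB'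
      rcases hB' with hB' | hB'
      · obtain ⟨a, ha, hBa⟩ := mem_subsL.1 hB'
        exact (hprops a ha).2.1 B' hBa hf
      · subst hB'
        exact absurd hf (not_fallible_strict_app hr)
    · intro t ht
      simp only [Arg.premises] at ht
      obtain ⟨a, ha, hta⟩ := mem_premisesL.1 ht
      exact (hprops a ha).2.2 hta

end ASPIC
namespace ASPIC
variable {L : Type}

theorem attacksOn_fallible {AS : ArgSystem L} {K : KB L} {A B B' : Arg L}
    (h : attacksOn AS K A B B') : B' ∈ B.subs ∧ fallibleTop AS K B' := by
  rcases h with ⟨hm, r, hr, htop, _⟩ | ⟨hm, r, hr, htop, _⟩ | ⟨hm, φ, hφ, heq, _⟩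
  · exact ⟨hm, Or.inl ⟨r, hr, htop⟩⟩
  · exact ⟨hm, Or.inl ⟨r, hr, htop⟩⟩
  · exact ⟨hm, Or.inr ⟨φ, hφ, heq⟩⟩

theorem prefIndepOn_fallible {AS : ArgSystem L} {K : KB L} {A B B' : Arg L}
    (h : prefIndepOn AS K A B B') : B' ∈ B.subs ∧ fallibleTop AS K B' := by
  rcases h with h | ⟨h, _⟩ | ⟨h, _⟩
  · exact attacksOn_fallible (Or.inl h)
  · exact attacksOn_fallible (Or.inr (Or.inl h))
  · exact attacksOn_fallible (Or.inr (Or.inr h))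

theorem attacksOn_transfer {AS : ArgSystem L} {K : KB L} {A B W B' : Arg L}
    (hBW : B' ∈ W.subs) (h : attacksOn AS K A B B') : attacksOn AS K A W B' := by
  rcases h with ⟨_, hrest⟩ | ⟨_, hrest⟩ | ⟨_, hrest⟩
  · exact Or.inl ⟨hBW, hrest⟩
  · exact Or.inr (Or.inl ⟨hBW, hrest⟩)
  · exact Or.inr (Or.inr ⟨hBW, hrest⟩)

theorem prefIndepOn_transfer {AS : ArgSystem L} {K : KB L} {A B W B' : Arg L}
    (hBW : B' ∈ W.subs) (h : prefIndepOn AS K A B B') : prefIndepOn AS K A W B' := by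
  rcases h with ⟨_, hrest⟩ | ⟨⟨_, hrest⟩, hc⟩ | ⟨⟨_, hrest⟩, hc⟩
  · exact Or.inl ⟨hBW, hrest⟩
  · exact Or.inr (Or.inl ⟨⟨hBW, hrest⟩, hc⟩)
  · exact Or.inr (Or.inr ⟨⟨hBW, hrest⟩, hc⟩)

theorem defeats_transfer {AS : ArgSystem L} {K : KB L} {slt : Arg L → Arg L → Prop}
    {X C W B' : Arg L} (hBC : B' ∈ C.subs) (hBW : B' ∈ W.subs)
    (h : prefIndepOn AS K X C B' ∨ (prefDepOn AS K X C B' ∧ ¬ slt X B')) :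
    defeats AS K slt X W := by
  rcases h with h | ⟨⟨hatt, hni⟩, hslt⟩
  · exact ⟨B', Or.inl (prefIndepOn_transfer hBW h)⟩
  · refine ⟨B', Or.inr ⟨⟨attacksOn_transfer hBW hatt, ?_⟩, hslt⟩⟩
    intro hW
    exact hni (prefIndepOn_transfer hBC hW)

/-- A `Good` argument is acceptable with respect to `E`. -/
theorem good_acceptable {AS : ArgSystem L} {K : KB L} {pre : Arg L → Arg L → Prop}
    {𝒜 E : Set (Arg L)}
    (hacc : ∀ A ∈ E, Acceptable 𝒜 (defeats AS K (sprec pre)) E A)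
    {C : Arg L} (hgood : Good AS K E C) :
    Acceptable 𝒜 (defeats AS K (sprec pre)) E C := by
  intro X hX hdef
  obtain ⟨B', hB'⟩ := hdef
  have hfall : B' ∈ C.subs ∧ fallibleTop AS K B' := by
    rcases hB' with h | ⟨⟨hatt, _⟩, _⟩
    · exact prefIndepOn_fallible h
    · exact attacksOn_fallible hatt
  obtain ⟨W, hW, hBW⟩ := hgood B' hfall.1 hfall.2
  have hdefW : defeats AS K (sprec pre) X W := defeats_transfer hfall.1 hBW hB'
  exact hacc W hW X hX hdefW

end ASPIC
namespace ASPIC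
variable {L : Type}

theorem trans_lemma {AS : ArgSystem L} (htrans : TransClosed AS) {S : Set L} {χ : L}
    (h : SDer AS S χ) :
    ∀ nχ, contrad AS χ nχ → ∀ F : Set L,
      SDer AS (S \ F) χ ∨ ∃ s ∈ F ∩ S, ∃ ns, contrad AS s ns ∧ SDer AS (S ∪ {nχ}) ns := by
  induction h with
  | @prem t ht =>
    intro nχ hc F
    by_cases hF : t ∈ F
    · exact Or.inr ⟨t, ⟨hF, ht⟩, nχ, hc, SDer.prem (Or.inr rfl)⟩
    · exact Or.inl (SDer.prem ⟨ht, hF⟩)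
  | @rule r hr hants ih =>
    intro nχ hc F
    by_cases hall : ∀ i : Fin r.ants.length, SDer AS (S \ F) (r.ants.get i)
    · refine Or.inl (SDer.rule hr ?_)
      intro ψ hψ
      obtain ⟨i, hi⟩ := List.mem_iff_get.1 hψ
      rw [← hi]; exact hall i
    · push_neg at hall
      obtain ⟨i, hi⟩ := hall
      obtain ⟨nφi, hci, hrule'⟩ := htrans r hr i nχ hc
      rcases ih (r.ants.get i) (r.ants.get_mem i) nφi hci F with hleft | hright
      · exact absurd hleft hi
      · obtain ⟨s, hs, ns, hns, hder⟩ := hright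
        have hnφi : SDer AS (S ∪ {nχ}) nφi := by
          have := SDer.rule (AS := AS) (S := S ∪ {nχ}) hrule' ?_
          · exact this
          · intro t ht
            rcases List.mem_or_eq_of_mem_set ht with h | h
            · exact sder_mono Set.subset_union_left (hants t h)
            · subst h; exact SDer.prem (Or.inr rfl)
        exact Or.inr ⟨s, hs, ns, hns, sder_cut hder hnφi Set.subset_union_left⟩

theorem key_dichotomy {AS : ArgSystem L}
    (hWD : ContraClosed AS ∨ TransClosed AS) {S F : Set L} (hFS : F ⊆ S)
    {φ ψ : L} (hc : contrad AS φ ψ) (hφ : SDer AS S φ) (hψ : SDer AS S ψ) :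
    (SDer AS (S \ F) φ ∧ SDer AS (S \ F) ψ) ∨
      ∃ s ∈ F, ∃ ns, contrad AS s ns ∧ SDer AS S ns := by
  rcases hWD with hcontra | htrans
  · by_cases hF : ∃ s, s ∈ F
    · obtain ⟨s, hsF⟩ := hF
      obtain ⟨ns, hns, hder⟩ := hcontra S s (hFS hsF) φ hφ ψ hc
      have : SDer AS (S ∪ {ψ}) ns := sder_mono (Set.union_subset_union_left _ Set.diff_subset) hder
      exact Or.inr ⟨s, hsF, ns, hns, sder_cut this hψ subset_rfl⟩
    · push_neg at hF
      have hFempty : F = ∅ := Set.eq_empty_iff_forall_notMem.2 hF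
      subst hFempty
      rw [Set.diff_empty]
      exact Or.inl ⟨hφ, hψ⟩
  · rcases trans_lemma htrans hφ ψ hc F with h1 | ⟨s, ⟨hsF, _⟩, ns, hns, hder⟩
    · rcases trans_lemma htrans hψ φ ⟨hc.2, hc.1⟩ F with h2 | ⟨s, ⟨hsF, _⟩, ns, hns, hder⟩
      · exact Or.inl ⟨h1, h2⟩
      · exact Or.inr ⟨s, hsF, ns, hns, sder_cut hder hφ subset_rfl⟩
    · exact Or.inr ⟨s, hsF, ns, hns, sder_cut hder hψ subset_rfl⟩

theorem attacks_of_fallible_conc {AS : ArgSystem L} {K : KB L} {C W C' : Arg L}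
    (hC' : C' ∈ W.subs) (hfall : fallibleTop AS K C')
    (hconc : C.conc ∈ AS.contr C'.conc) : attacks AS K C W := by
  rcases hfall with ⟨r, hr, htop⟩ | ⟨t, ht, heq⟩
  · exact ⟨C', Or.inr (Or.inl ⟨hC', r, hr, htop, hconc⟩)⟩
  · refine ⟨C', Or.inr (Or.inr ⟨hC', t, ht, heq, ?_⟩)⟩
    subst heq
    exact hconc

end ASPIC
namespace ASPIC
variable {L : Type}

theorem premise_union_ccons {AS : ArgSystem L} {K : KB L} {pre : Arg L → Arg L → Prop}
    {E : Set (Arg L)}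
    (hWD : WellDefinedCSAF AS K)
    (hE : Complete (ArgsCSAF AS K) (CFwrt (attacks AS K)) (defeats AS K (sprec pre)) E) :
    CCons AS (⋃ W ∈ E, W.premises) := by
  classical
  by_contra hinc
  obtain ⟨⟨hsub, hcf, hacc⟩, hcomp⟩ := hE
  set T : Set L := ⋃ W ∈ E, W.premises with hTdef
  obtain ⟨S₀, hS₀T, hmin⟩ := exists_min_cincons hinc
  have hIsArgE : ∀ W ∈ E, IsArg AS K W := fun W hW => (hsub hW).1
  have hTK : ∀ t ∈ T, t ∈ K.Kn ∪ K.Kp := by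
    intro t ht
    obtain ⟨W, hW, htW⟩ := Set.mem_iUnion₂.1 ht
    exact premises_subset_K (hIsArgE W hW) htW
  by_cases hSp : ∃ s ∈ S₀, s ∈ K.Kp
  · obtain ⟨s, hsS₀, hsKp⟩ := hSp
    obtain ⟨ns, hns, hder⟩ := hWD.2 S₀ hmin s hsS₀
    have hrealizer : ∀ t ∈ S₀ \ {s}, ∃ D : Arg L, D.conc = t ∧
        (IsArg AS K D ∧ Good AS K E D ∧ D.premises ⊆ S₀ \ {s}) := by
      intro t ht
      obtain ⟨W, hW, htW⟩ := Set.mem_iUnion₂.1 (hS₀T ht.1)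
      refine ⟨Arg.prem t, rfl, IsArg.prem (hTK t (hS₀T ht.1)), ?_, ?_⟩
      · intro B' hB' _
        simp only [Arg.subs, Set.mem_singleton_iff] at hB'
        subst hB'
        exact ⟨W, hW, prem_mem_subs W t htW⟩
      · intro u hu
        simp only [Arg.premises, Set.mem_singleton_iff] at hu
        subst hu; exact ht
    obtain ⟨D, hDconc, hDIsArg, hDGood, hDprem⟩ := realize hrealizer hder
    have hssub : S₀ \ {s} ⊂ S₀ := Set.sdiff_singleton_ssubset.2 hsS₀
    have hCC : CCons AS (S₀ \ {s}) := hmin.2 _ hssub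
    have hD𝒜 : D ∈ ArgsCSAF AS K := ⟨hDIsArg, ccons_mono hDprem hCC⟩
    have hDE : D ∈ E := hcomp D hD𝒜 (good_acceptable hacc hDGood)
    obtain ⟨W0, hW0, hsW0⟩ := Set.mem_iUnion₂.1 (hS₀T hsS₀)
    have hatt : attacks AS K D W0 := by
      refine attacks_of_fallible_conc (prem_mem_subs W0 s hsW0)
        (Or.inr ⟨s, hsKp, rfl⟩) ?_
      rw [hDconc]
      exact hns.2
    exact hcf D hDE W0 hW0 hatt
  · push_neg at hSp
    have hS₀Kn : S₀ ⊆ K.Kn := by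
      intro t ht
      rcases hTK t (hS₀T ht) with h | h
      · exact h
      · exact absurd h (hSp t ht)
    obtain ⟨χ, nχ, hc, h1, h2⟩ := not_ccons_iff.1 hmin.1
    exact hWD.1.1 ⟨χ, nχ, sder_clrs hS₀Kn h1, sder_clrs hS₀Kn h2, hc.2⟩

end ASPIC
namespace ASPIC

/-- Theorem: indirect consistency: in a well-defined (c-)SAF with a
reasonable ordering, the strict closure of the conclusions of an att-complete extension is
consistent. -/
theorem statement7 {L : Type} (AS : ArgSystem L) (K : KB L) (pre : Arg L → Arg L → Prop)
    (𝒜 : Set (Arg L))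
    (hcase :
      (𝒜 = ArgsSAF AS K ∧ WellDefinedSAF AS K) ∨
      (𝒜 = ArgsCSAF AS K ∧ WellDefinedCSAF AS K))
    (hreas : Reasonable AS K pre)
    (E : Set (Arg L))
    (hE : Complete 𝒜 (CFwrt (attacks AS K)) (defeats AS K (sprec pre)) E) :
    Consistent AS {φ | ClRs AS (Arg.conc '' E) φ} := by
  classical
  have hsub : E ⊆ 𝒜 := hE.1.1
  have hcf : CFwrt (attacks AS K) E := hE.1.2.1
  have hacc : ∀ A ∈ E, Acceptable 𝒜 (defeats AS K (sprec pre)) E A := hE.1.2.2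
  have hcomp : ∀ A ∈ 𝒜, Acceptable 𝒜 (defeats AS K (sprec pre)) E A → A ∈ E := hE.2
  have hWD : WellDefinedSAF AS K := by
    rcases hcase with ⟨_, h⟩ | ⟨_, h⟩
    · exact h
    · exact h.1
  have hIsArgE : ∀ W ∈ E, IsArg AS K W := by
    intro W hW
    rcases hcase with ⟨h𝒜, _⟩ | ⟨h𝒜, _⟩
    · exact (h𝒜 ▸ hsub hW : W ∈ ArgsSAF AS K)
    · exact ((h𝒜 ▸ hsub hW : W ∈ ArgsCSAF AS K)).1
  set T : Set L := ⋃ W ∈ E, W.premises with hTdef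
  have hpremT : ∀ W ∈ E, W.premises ⊆ T := by
    intro W hW
    exact Set.subset_biUnion_of_mem hW
  have hT𝒜 : ∀ C : Arg L, IsArg AS K C → C.premises ⊆ T → C ∈ 𝒜 := by
    rcases hcase with ⟨h𝒜, _⟩ | ⟨h𝒜, hWDc⟩
    · intro C hC _
      rw [h𝒜]; exact hC
    · intro C hC hprem
      rw [h𝒜]
      exact ⟨hC, ccons_mono hprem (premise_union_ccons hWDc (h𝒜 ▸ hE))⟩
  have hmemE : ∀ C : Arg L, IsArg AS K C → Good AS K E C → C.premises ⊆ T → C ∈ E :=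
    fun C hC hg hp => hcomp C (hT𝒜 C hC hp) (good_acceptable hacc hg)
  -- closure under strict rules
  have hclosure : ∀ χ, ClRs AS (Arg.conc '' E) χ → ∃ W ∈ E, W.conc = χ := by
    intro χ h
    induction h with
    | @base t hb => obtain ⟨W, hW, hc⟩ := hb; exact ⟨W, hW, hc⟩
    | @step r hr hants ih =>
      obtain ⟨l, hmap, hl⟩ := exists_list_of_forall (Q := fun D => D ∈ E) r.ants (by
        intro t ht
        obtain ⟨W, hW, hc⟩ := ih t ht
        exact ⟨W, hc, hW⟩)
      refine ⟨Arg.app l r, ?_, rfl⟩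
      refine hmemE _ (IsArg.app (fun a ha => hIsArgE a (hl a ha)) (Or.inl hr) hmap) ?_ ?_
      · intro B' hB' hf
        simp only [Arg.subs, Set.mem_union, Set.mem_singleton_iff] at hB'
        rcases hB' with hB' | hB'
        · obtain ⟨a, ha, hBa⟩ := mem_subsL.1 hB'
          exact ⟨a, hl a ha, hBa⟩
        · subst hB'; exact absurd hf (not_fallible_strict_app hr)
      · intro t ht
        simp only [Arg.premises] at ht
        obtain ⟨a, ha, hta⟩ := mem_premisesL.1 ht
        exact hpremT a (hl a ha) hta
  intro hex
  obtain ⟨φ, ψ, hφcl, hψcl, hψc⟩ := hex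
  obtain ⟨A, hA, hAc⟩ := hclosure φ hφcl
  obtain ⟨B, hB, hBc⟩ := hclosure ψ hψcl
  by_cases hcc : φ ∈ AS.contr ψ
  · -- contradictory case
    have hcontr : contrad AS φ ψ := ⟨hcc, hψc⟩
    set F : Set L :=
      {t | ∃ C', (C' ∈ A.subs ∨ C' ∈ B.subs) ∧ fallibleTop AS K C' ∧ C'.conc = t} with hFdef
    set N : Set L := (A.premises ∪ B.premises) ∩ K.Kn with hNdef
    set S : Set L := F ∪ N with hSdef
    have hSφ : SDer AS S φ := by
      have := sder_fallible (hIsArgE A hA) S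
        (fun C' hC' hf => Or.inl ⟨C', Or.inl hC', hf, rfl⟩)
        (fun t ht => Or.inr ⟨Or.inl ht.1, ht.2⟩)
      rwa [hAc] at this
    have hSψ : SDer AS S ψ := by
      have := sder_fallible (hIsArgE B hB) S
        (fun C' hC' hf => Or.inl ⟨C', Or.inr hC', hf, rfl⟩)
        (fun t ht => Or.inr ⟨Or.inr ht.1, ht.2⟩)
      rwa [hBc] at this
    rcases key_dichotomy hWD.2.2 Set.subset_union_left hcontr hSφ hSψ with
      ⟨h1, h2⟩ | ⟨s, hsF, ns, hns, hder⟩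
    · have hSFKn : S \ F ⊆ K.Kn := by
        intro t ht
        rcases ht.1 with h | h
        · exact absurd h ht.2
        · exact h.2
      exact hWD.1 ⟨φ, ψ, sder_clrs hSFKn h1, sder_clrs hSFKn h2, hψc⟩
    · obtain ⟨C', hC'AB, hC'fall, hC'conc⟩ := hsF
      have hrealizer : ∀ t ∈ S, ∃ D : Arg L, D.conc = t ∧
          (IsArg AS K D ∧ Good AS K E D ∧ D.premises ⊆ A.premises ∪ B.premises) := by
        intro t ht
        rcases ht with ⟨C'', hAB, hf, hconc⟩ | hN
        · refine ⟨C'', hconc, ?_, ?_, ?_⟩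
          · rcases hAB with h | h
            · exact isArg_subs (hIsArgE A hA) C'' h
            · exact isArg_subs (hIsArgE B hB) C'' h
          · rcases hAB with h | h
            · exact good_of_sub hA h
            · exact good_of_sub hB h
          · rcases hAB with h | h
            · exact (premises_subs A C'' h).trans Set.subset_union_left
            · exact (premises_subs B C'' h).trans Set.subset_union_right
        · refine ⟨Arg.prem t, rfl, IsArg.prem (Or.inl hN.2), ?_, ?_⟩
          · intro B' hB' hf
            simp only [Arg.subs, Set.mem_singleton_iff] at hB'
            subst hB'
            exact absurd hf (not_fallible_axiom_prem hN.2)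
          · intro u hu
            simp only [Arg.premises, Set.mem_singleton_iff] at hu
            subst hu; exact hN.1
      obtain ⟨Cs, hCconc, hCIsArg, hCGood, hCprem⟩ := realize hrealizer hder
      have hCsE : Cs ∈ E := hmemE Cs hCIsArg hCGood
        (hCprem.trans (Set.union_subset (hpremT A hA) (hpremT B hB)))
      have hcontrC : Cs.conc ∈ AS.contr C'.conc := by
        rw [hCconc, hC'conc]
        exact hns.2
      rcases hC'AB with h | h
      · exact hcf Cs hCsE A hA (attacks_of_fallible_conc h hC'fall hcontrC)
      · exact hcf Cs hCsE B hB (attacks_of_fallible_conc h hC'fall hcontrC)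
  · -- contrary case
    have hcontrary : contrary AS ψ φ := ⟨hψc, hcc⟩
    obtain ⟨hφKn, hφrule⟩ := hWD.2.1 ψ φ hcontrary
    have hAIs := hIsArgE A hA
    cases hAIs with
    | @prem t hφK =>
      have ht : t = φ := hAc
      subst ht
      have htKp : t ∈ K.Kp := by
        rcases hφK with h | h
        · exact absurd h hφKn
        · exact h
      refine hcf B hB _ hA ⟨Arg.prem t, Or.inr (Or.inr ⟨subs_self _, t, htKp, rfl, ?_⟩)⟩
      rw [hBc]
      exact hψc
    | @app l r hl hr hmap =>
      have hrc : r.cons = φ := hAc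
      have hrd : r ∈ AS.Rd := by
        rcases hr with h | h
        · exact absurd hrc (hφrule r h)
        · exact h
      refine hcf B hB _ hA
        ⟨Arg.app l r, Or.inr (Or.inl ⟨subs_self _, r, hrd, rfl, ?_⟩)⟩
      rw [hBc]
      show ψ ∈ AS.contr (Arg.app l r).conc
      rw [show (Arg.app l r).conc = φ from hAc]
      exact hψc

end ASPIC
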